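/- Assume additionally that a + b ≥ 1. Let û₂ > k satisfy: for all x ≥ û₂, (c − b·k)/(1 − a) < x + ln((x − k)/x²), and set ŵ₂ := (c − b·û₂)/(1 − a). Then the set D̂₂⁺ = [k, û₂] × [ŵ₂, v̂] is a weakly absorbing set for the Chialvo map f: for every point (x,y) ∈ ℝ² there exists some n ≥ 0 such that fⁿ(x,y) ∈ D̂₂⁺. -/
import Mathlib


set_option maxHeartbeats 1000000 in
/-- Assuming `a + b ≥ 1`, the set `D̂₂⁺ = [k, û₂] × [ŵ₂, v̂]` is a weakly
absorbing set for the Chialvo map: every forward trajectory hits it. -/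
theorem chialvo_D2plus_weakly_absorbing
    (a b c k : ℝ)
    (ha : a ∈ Set.Ioo (0:ℝ) 1) (hb : b ∈ Set.Ioo (0:ℝ) 1)
    (hc : c ∈ Set.Ioo (0:ℝ) 1) (hk : 0 < k)
    (hab : a + b ≥ 1)
    (f : ℝ × ℝ → ℝ × ℝ)
    (hf : ∀ p : ℝ × ℝ,
      f p = (p.1 ^ 2 * Real.exp (p.2 - p.1) + k, a * p.2 - b * p.1 + c))
    (v : ℝ) (hv : v = (c - b * k) / (1 - a))
    (u2 : ℝ) (hu2k : u2 > k)
    (hu2 : ∀ x ≥ u2, (c - b * k) / (1 - a) < x + Real.log ((x - k) / x ^ 2))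
    (w2 : ℝ) (hw2 : w2 = (c - b * u2) / (1 - a)) :
    ∀ p : ℝ × ℝ, ∃ n : ℕ, f^[n] p ∈ Set.Icc k u2 ×ˢ Set.Icc w2 v := by
  obtain ⟨ha0, ha1⟩ := ha
  obtain ⟨hb0, hb1⟩ := hb
  have h1a : (0:ℝ) < 1 - a := by linarith
  have hvid : c - b * k = (1 - a) * v := by
    rw [hv]; field_simp
  have hw2id : c - b * u2 = (1 - a) * w2 := by
    rw [hw2]; field_simp
  -- Key analytic consequence of `hu2`.
  have keyA : ∀ x, u2 ≤ x → x ^ 2 * Real.exp (v - x) + k < x := by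
    intro x hx
    have hxk : 0 < x - k := by linarith
    have hx0 : 0 < x := by linarith
    have h := hu2 x hx
    rw [← hv] at h
    have h2 : Real.exp (v - x) < (x - k) / x ^ 2 := by
      have h3 : v - x < Real.log ((x - k) / x ^ 2) := by linarith
      have h4 := Real.exp_lt_exp.mpr h3
      rwa [Real.exp_log (by positivity)] at h4
    have hx2 : (0:ℝ) < x ^ 2 := by positivity
    have h4 : x ^ 2 * Real.exp (v - x) < x ^ 2 * ((x - k) / x ^ 2) :=
      (mul_lt_mul_iff_right₀ hx2).mpr h2
    have h5 : x ^ 2 * ((x - k) / x ^ 2) = x - k := by field_simp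
    rw [h5] at h4
    linarith
  intro p
  set X : ℕ → ℝ := fun n => (f^[n] p).1 with hXdef
  set Y : ℕ → ℝ := fun n => (f^[n] p).2 with hYdef
  have hXrec : ∀ n, X (n + 1) = (X n) ^ 2 * Real.exp (Y n - X n) + k := by
    intro n
    show (f^[n + 1] p).1 = _
    rw [Function.iterate_succ_apply', hf]
  have hYrec : ∀ n, Y (n + 1) = a * Y n - b * X n + c := by
    intro n
    show (f^[n + 1] p).2 = _
    rw [Function.iterate_succ_apply', hf]
  have hXk : ∀ n, 1 ≤ n → k ≤ X n := by
    intro n hn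
    obtain ⟨m, rfl⟩ : ∃ m, n = m + 1 := ⟨n - 1, by omega⟩
    rw [hXrec]
    nlinarith [mul_nonneg (sq_nonneg (X m)) (Real.exp_pos (Y m - X m)).le]
  -- Step 2: eventually `Y n ≤ v`.
  have hstep2 : ∃ N, 1 ≤ N ∧ Y N ≤ v := by
    by_contra hcon
    push_neg at hcon
    have he1 : 0 < Y 1 - v := by linarith [hcon 1 le_rfl]
    have hgeo : ∀ m, Y (m + 1) - v ≤ a ^ m * (Y 1 - v) := by
      intro m
      induction m with
      | zero => simp
      | succ m ih =>
        have hx := hXk (m + 1) (by omega)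
        have hrec := hYrec (m + 1)
        have hmul : a * (Y (m + 1) - v) ≤ a * (a ^ m * (Y 1 - v)) :=
          mul_le_mul_of_nonneg_left ih ha0.le
        have hbx : 0 ≤ b * (X (m + 1) - k) :=
          mul_nonneg hb0.le (by linarith)
        rw [pow_succ]
        nlinarith [hmul, hbx, hrec, hvid]
    have hxb : ∀ m, b * (X (m + 1) - k) ≤ a ^ (m + 1) * (Y 1 - v) := by
      intro m
      have hrec := hYrec (m + 1)
      have hpos : 0 < Y (m + 1 + 1) - v := by linarith [hcon (m + 1 + 1) (by omega)]
      have hmul : a * (Y (m + 1) - v) ≤ a * (a ^ m * (Y 1 - v)) :=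
        mul_le_mul_of_nonneg_left (hgeo m) ha0.le
      rw [pow_succ]
      nlinarith [hvid]
    have hxub : ∀ m, X (m + 1) ≤ k + (Y 1 - v) / b := by
      intro m
      have h1 := hxb m
      have h2 : a ^ (m + 1) ≤ 1 := pow_le_one₀ ha0.le ha1.le
      have h3 : a ^ (m + 1) * (Y 1 - v) ≤ 1 * (Y 1 - v) :=
        mul_le_mul_of_nonneg_right h2 he1.le
      have h4 : b * (X (m + 1) - k) ≤ Y 1 - v := by linarith
      have h5 : X (m + 1) - k ≤ (Y 1 - v) / b := by
        rw [le_div_iff₀ hb0]; linarith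
      linarith
    set δ₀ : ℝ := k ^ 2 * Real.exp (v - (k + (Y 1 - v) / b)) with hδ₀def
    have hδ₀ : 0 < δ₀ := mul_pos (by positivity) (Real.exp_pos _)
    have hlow : ∀ m, δ₀ ≤ X (m + 2) - k := by
      intro m
      have hrec := hXrec (m + 1)
      have hx1 : k ≤ X (m + 1) := hXk (m + 1) (by omega)
      have hy1 : v < Y (m + 1) := hcon (m + 1) (by omega)
      have hub := hxub m
      have harg : v - (k + (Y 1 - v) / b) ≤ Y (m + 1) - X (m + 1) := by linarith
      have hsq : k ^ 2 ≤ (X (m + 1)) ^ 2 := pow_le_pow_left₀ hk.le hx1 2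
      have hmm : k ^ 2 * Real.exp (v - (k + (Y 1 - v) / b)) ≤
          (X (m + 1)) ^ 2 * Real.exp (Y (m + 1) - X (m + 1)) :=
        mul_le_mul hsq (Real.exp_le_exp.mpr harg) (Real.exp_pos _).le (by positivity)
      have : X (m + 1 + 1) = (X (m + 1)) ^ 2 * Real.exp (Y (m + 1) - X (m + 1)) + k := hrec
      linarith [this, hmm]
    obtain ⟨n, hn⟩ := exists_pow_lt_of_lt_one
      (show (0:ℝ) < b * δ₀ / (Y 1 - v) from div_pos (mul_pos hb0 hδ₀) he1) ha1
    have hpow : a ^ (n + 2) ≤ a ^ n := pow_le_pow_of_le_one ha0.le ha1.le (by omega)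
    have h6 : a ^ n * (Y 1 - v) < b * δ₀ := (lt_div_iff₀ he1).mp hn
    have h7 := hxb (n + 1)
    have h8 := hlow n
    have h9 : a ^ (n + 2) * (Y 1 - v) ≤ a ^ n * (Y 1 - v) :=
      mul_le_mul_of_nonneg_right hpow he1.le
    nlinarith
  obtain ⟨N, hN1, hNv⟩ := hstep2
  -- `Y n ≤ v` for all `n ≥ N`.
  have hYvaux : ∀ j, Y (N + j) ≤ v := by
    intro j
    induction j with
    | zero => simpa using hNv
    | succ j ih =>
      have hx := hXk (N + j) (by omega)
      have hrec := hYrec (N + j)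
      have h1 : 0 ≤ a * (v - Y (N + j)) := mul_nonneg ha0.le (by linarith)
      have h2 : 0 ≤ b * (X (N + j) - k) := mul_nonneg hb0.le (by linarith)
      have : N + (j + 1) = (N + j) + 1 := rfl
      rw [this]
      nlinarith [hvid]
  have hYv : ∀ n, N ≤ n → Y n ≤ v := by
    intro n hn
    obtain ⟨j, rfl⟩ := Nat.exists_eq_add_of_le hn
    exact hYvaux j
  -- Step 3: the orbit enters the strip `x ≤ u2`.
  have hstep3 : ∃ m, N ≤ m ∧ X m ≤ u2 := by
    by_contra hcon
    push_neg at hcon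
    have hXN : u2 ≤ X N := (hcon N le_rfl).le
    set φ : ℝ → ℝ := fun x => x - x ^ 2 * Real.exp (v - x) - k with hφdef
    have hcont : ContinuousOn φ (Set.Icc u2 (X N)) := by fun_prop
    obtain ⟨z, hzmem, hzmin⟩ :=
      isCompact_Icc.exists_isMinOn (Set.nonempty_Icc.mpr hXN) hcont
    set D : ℝ := z - z ^ 2 * Real.exp (v - z) - k with hDdef
    have hδ : 0 < D := by
      have := keyA z hzmem.1
      rw [hDdef]
      linarith
    have hminR : ∀ x, x ∈ Set.Icc u2 (X N) →
        D ≤ x - x ^ 2 * Real.exp (v - x) - k := fun x hx => hzmin hx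
    have hdec : ∀ j, X (N + j) ≤ X N - j * D := by
      intro j
      induction j with
      | zero => simp
      | succ j ih =>
        have hge : u2 ≤ X (N + j) := (hcon (N + j) (Nat.le_add_right _ _)).le
        have hjφ : 0 ≤ (j : ℝ) * D := mul_nonneg (by positivity) hδ.le
        have hmem : X (N + j) ∈ Set.Icc u2 (X N) := ⟨hge, by linarith⟩
        have hmin := hminR _ hmem
        have hYle : Y (N + j) ≤ v := hYvaux j
        have hrec := hXrec (N + j)
        have hE : Real.exp (Y (N + j) - X (N + j)) ≤ Real.exp (v - X (N + j)) :=
          Real.exp_le_exp.mpr (by linarith)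
        have hup : X (N + j + 1) ≤ (X (N + j)) ^ 2 * Real.exp (v - X (N + j)) + k := by
          rw [hrec]
          have := mul_le_mul_of_nonneg_left hE (sq_nonneg (X (N + j)))
          linarith
        have hstep : N + (j + 1) = (N + j) + 1 := rfl
        rw [hstep]
        push_cast
        linarith
    obtain ⟨j, hj⟩ := exists_nat_gt ((X N - u2) / D)
    have hjj : X N - u2 < j * D := by
      rw [div_lt_iff₀ hδ] at hj
      linarith
    have := hcon (N + j) (Nat.le_add_right _ _)
    linarith [hdec j]
  obtain ⟨m, hmN, hmu2⟩ := hstep3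
  have hm1 : 1 ≤ m := le_trans hN1 hmN
  by_cases hym : w2 ≤ Y m
  · exact ⟨m, ⟨⟨hXk m hm1, hmu2⟩, hym, hYv m hmN⟩⟩
  push_neg at hym
  -- Step 4: the crossing argument.
  have hw2len : w2 ≤ v - (u2 - k) := by
    have h1 : (1 - a) * (v - w2) = b * (u2 - k) := by linarith [hvid, hw2id]
    have h2 : (1 - a) * (u2 - k) ≤ b * (u2 - k) :=
      mul_le_mul_of_nonneg_right (by linarith) (by linarith)
    have h3 : (1 - a) * (u2 - k) ≤ (1 - a) * (v - w2) := by linarith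
    have h4 : u2 - k ≤ v - w2 := le_of_mul_le_mul_left h3 h1a
    linarith
  set U : ℝ := u2 ^ 2 * Real.exp (v - u2) + k with hUdef
  have hUu2 : U < u2 := keyA u2 le_rfl
  have hinv : ∀ x y : ℝ, k ≤ x → x ≤ u2 → y ≤ w2 →
      x ^ 2 * Real.exp (y - x) + k ≤ U := by
    intro x y h1 h2 h3
    have hyx : y - x ≤ v - u2 := by linarith
    have hE : Real.exp (y - x) ≤ Real.exp (v - u2) := Real.exp_le_exp.mpr hyx
    have hsq : x ^ 2 ≤ u2 ^ 2 := pow_le_pow_left₀ (le_trans hk.le h1) h2 2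
    have : x ^ 2 * Real.exp (y - x) ≤ u2 ^ 2 * Real.exp (v - u2) :=
      mul_le_mul hsq hE (Real.exp_pos _).le (by positivity)
    simp only [hUdef]
    linarith
  have hcross : ∃ j, w2 < Y (m + j) := by
    by_contra hcon2
    push_neg at hcon2
    have hXle : ∀ j, X (m + j) ≤ u2 := by
      intro j
      induction j with
      | zero => simpa using hmu2
      | succ j ih =>
        have h1 := hinv (X (m + j)) (Y (m + j)) (hXk (m + j) (by omega)) ih (hcon2 j)
        have : N + 0 = N := rfl
        have hrec := hXrec (m + j)
        have : X (m + (j + 1)) = X ((m + j) + 1) := rfl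
        rw [this, hrec]
        linarith
    have hXleU : ∀ j, X (m + j + 1) ≤ U := by
      intro j
      rw [hXrec]
      exact hinv _ _ (hXk (m + j) (by omega)) (hXle j) (hcon2 j)
    set ρ : ℝ := b * (u2 - U) with hρdef
    have hρ : 0 < ρ := mul_pos hb0 (by linarith)
    have hstepY : ∀ j, Y (m + j + 1) + ρ ≤ Y (m + j + 2) := by
      intro j
      have h1 := hXleU j
      have h2 : Y (m + j + 1) ≤ w2 := hcon2 (j + 1)
      have hrec : Y (m + j + 2) = a * Y (m + j + 1) - b * X (m + j + 1) + c :=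
        hYrec (m + j + 1)
      have h3 : 0 ≤ (1 - a) * (w2 - Y (m + j + 1)) :=
        mul_nonneg h1a.le (by linarith)
      have h4 : 0 ≤ b * (U - X (m + j + 1)) := mul_nonneg hb0.le (by linarith)
      nlinarith [hw2id]
    have hlin : ∀ j, Y (m + 1) + j * ρ ≤ Y (m + j + 1) := by
      intro j
      induction j with
      | zero => simp
      | succ j ih =>
        have := hstepY j
        have hj : (m + (j + 1)) + 1 = m + j + 2 := rfl
        rw [hj]
        push_cast
        linarith
    obtain ⟨j, hj⟩ := exists_nat_gt ((w2 - Y (m + 1)) / ρ)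
    have hjj : w2 - Y (m + 1) < j * ρ := by
      rw [div_lt_iff₀ hρ] at hj
      linarith
    have h5 : Y (m + j + 1) ≤ w2 := hcon2 (j + 1)
    linarith [hlin j]
  classical
  set j₀ := Nat.find hcross with hj₀def
  have hj₀spec : w2 < Y (m + j₀) := Nat.find_spec hcross
  have hj₀min : ∀ i, i < j₀ → Y (m + i) ≤ w2 := by
    intro i hi
    exact not_lt.mp (Nat.find_min hcross hi)
  have hXfin : ∀ i, i ≤ j₀ → X (m + i) ≤ u2 := by
    intro i
    induction i with
    | zero => intro _; simpa using hmu2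
    | succ i ih =>
      intro h
      have hi : i < j₀ := by omega
      have h1 := hinv (X (m + i)) (Y (m + i)) (hXk (m + i) (by omega))
        (ih hi.le) (hj₀min i hi)
      have : X (m + (i + 1)) = X ((m + i) + 1) := rfl
      rw [this, hXrec]
      linarith
  refine ⟨m + j₀, ⟨⟨hXk (m + j₀) (by omega), hXfin j₀ le_rfl⟩,
    hj₀spec.le, hYv (m + j₀) (by omega)⟩⟩
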